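/- Let B ∈ C^{n×n} with B_H ≥ 0, B_A = (B-B*)/2. For every m ∈ ℕ₀, the range of the block matrix [√B_H, B_A √B_H, …, B_A^m √B_H] equals the range of [√B_H, B √B_H, …, B^m √B_H]. -/

import Mathlib

open Matrix
open scoped ComplexOrder

noncomputable def Matrix.PosSemidef.sqrt {n : Type*} [Fintype n] [DecidableEq n] {𝕜 : Type*} [RCLike 𝕜]
    {A : Matrix n n 𝕜} (hA : A.PosSemidef) : Matrix n n 𝕜 :=
  hA.1.eigenvectorUnitary.1 * diagonal ((↑) ∘ (√·) ∘ hA.1.eigenvalues) *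
    (star hA.1.eigenvectorUnitary : Matrix n n 𝕜)

lemma Matrix.PosSemidef.sqrt_mul_self {n : Type*} [Fintype n] [DecidableEq n]
    {A : Matrix n n ℂ} (hA : A.PosSemidef) : hA.sqrt * hA.sqrt = A := by
  conv_rhs => rw [hA.1.spectral_theorem]
  have hU : (star hA.1.eigenvectorUnitary : Matrix n n ℂ) * hA.1.eigenvectorUnitary = 1 :=
    Unitary.coe_star_mul_self _
  simp only [Matrix.PosSemidef.sqrt, Unitary.conjStarAlgAut_apply]
  simp only [mul_assoc]
  rw [← mul_assoc _ (hA.1.eigenvectorUnitary : Matrix n n ℂ), hU, one_mul, ← mul_assoc (diagonal _),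
    diagonal_mul_diagonal]
  congr 3
  funext i
  simp only [Function.comp_apply]
  rw [← RCLike.ofReal_mul, Real.mul_self_sqrt (hA.eigenvalues_nonneg i)]

private lemma range_mul_eq_map {n : ℕ} (X Y : Matrix (Fin n) (Fin n) ℂ) :
    LinearMap.range ((X * Y).mulVecLin)
      = Submodule.map X.mulVecLin (LinearMap.range Y.mulVecLin) := by
  rw [Matrix.mulVecLin_mul, LinearMap.range_comp]

private lemma range_add_le {n : ℕ} (X Y : Matrix (Fin n) (Fin n) ℂ) :
    LinearMap.range ((X + Y).mulVecLin)
      ≤ LinearMap.range X.mulVecLin ⊔ LinearMap.range Y.mulVecLin := by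
  rintro _ ⟨v, rfl⟩
  rw [Matrix.mulVecLin_add]
  exact Submodule.add_mem_sup ⟨v, rfl⟩ ⟨v, rfl⟩

/-- Core step: if each `C * X` decomposes as `A * X + S * Y`, then the range of `C^j * S`
is contained in the span of the ranges of `A^i * S`, `i ≤ j`. -/
private lemma key {n : ℕ} (A C S : Matrix (Fin n) (Fin n) ℂ)
    (h : ∀ X : Matrix (Fin n) (Fin n) ℂ, ∃ Y, C * X = A * X + S * Y) (j : ℕ) :
    LinearMap.range ((C ^ j * S).mulVecLin)
      ≤ ⨆ i : Fin (j+1), LinearMap.range ((A ^ (i : ℕ) * S).mulVecLin) := by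
  induction j with
  | zero =>
      exact le_iSup (fun i : Fin 1 =>
        LinearMap.range ((A ^ (i : ℕ) * S).mulVecLin)) 0
  | succ j ih =>
      obtain ⟨Y, hY⟩ := h (C ^ j * S)
      have hC : C ^ (j+1) * S = A * (C ^ j * S) + S * Y := by
        rw [pow_succ', mul_assoc]; exact hY
      rw [hC]
      refine (range_add_le _ _).trans (sup_le ?_ ?_)
      · rw [range_mul_eq_map]
        refine (Submodule.map_mono ih).trans ?_
        rw [Submodule.map_iSup]
        refine iSup_le fun i => ?_
        rw [← range_mul_eq_map, ← mul_assoc, ← pow_succ']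
        have := le_iSup (fun i : Fin (j+2) =>
          LinearMap.range ((A ^ (i : ℕ) * S).mulVecLin)) ⟨(i : ℕ)+1, by omega⟩
        simpa using this
      · rw [range_mul_eq_map]
        refine le_trans (LinearMap.map_le_range) ?_
        have := le_iSup (fun i : Fin (j+2) =>
          LinearMap.range ((A ^ (i : ℕ) * S).mulVecLin)) 0
        simpa using this

/-- The range of `[√B_H, B_A √B_H, …, B_A^m √B_H]` equals the range of
`[√B_H, B √B_H, …, B^m √B_H]`. -/
theorem kalman_range_BA_eq_range_B {n : ℕ} (B : Matrix (Fin n) (Fin n) ℂ)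
    (hBH : ((1/2 : ℂ) • (B + Bᴴ)).PosSemidef) (m : ℕ) :
    (⨆ j : Fin (m+1),
        LinearMap.range ((((1/2 : ℂ) • (B - Bᴴ)) ^ (j : ℕ) * hBH.sqrt).mulVecLin))
      = ⨆ j : Fin (m+1),
        LinearMap.range ((B ^ (j : ℕ) * hBH.sqrt).mulVecLin) := by
  set S := hBH.sqrt with hS
  set A := (1/2 : ℂ) • (B - Bᴴ) with hA
  have hSS : S * S = (1/2 : ℂ) • (B + Bᴴ) := hBH.sqrt_mul_self
  have hB : A + S * S = B := by rw [hSS, hA]; module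
  have h1 : ∀ X : Matrix (Fin n) (Fin n) ℂ, ∃ Y, B * X = A * X + S * Y := by
    intro X
    exact ⟨S * X, by rw [← mul_assoc, ← add_mul, hB]⟩
  have h2 : ∀ X : Matrix (Fin n) (Fin n) ℂ, ∃ Y, A * X = B * X + S * Y := by
    intro X
    refine ⟨-(S * X), ?_⟩
    rw [mul_neg, ← mul_assoc, ← hB, add_mul]
    abel
  apply le_antisymm
  · refine iSup_le fun j => (key B A S h2 j).trans (iSup_le fun i => ?_)
    have := le_iSup (fun j : Fin (m+1) =>
      LinearMap.range ((B ^ (j : ℕ) * S).mulVecLin)) ⟨(i : ℕ), by omega⟩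
    simpa using this
  · refine iSup_le fun j => (key A B S h1 j).trans (iSup_le fun i => ?_)
    have := le_iSup (fun j : Fin (m+1) =>
      LinearMap.range ((A ^ (j : ℕ) * S).mulVecLin)) ⟨(i : ℕ), by omega⟩
    simpa using this
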